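/- For every integer n≥1 and every A>0 there exists R*>0, depending only on n, A, s and f (in particular independent of β and m), such that for every R≥R*, every β∈(0,1], every integer m≥n, and every u∈E^{+n}⊕E^{−m}⊕N^m with ‖u‖_{β,E}=R, one has J_β(u) ≤ −A. -/

import Mathlib

open MeasureTheory

noncomputable section

/-- The space-time domain `Q = (0,π) × (0,2π)`. -/
def Qset : Set (ℝ × ℝ) := Set.Ioo 0 Real.pi ×ˢ Set.Ioo 0 (2 * Real.pi)

/-- Basis function `sin(jx)·cos(kt)`. -/
def phiA (j k : ℕ) : ℝ × ℝ → ℝ := fun p => Real.sin (j * p.1) * Real.cos (k * p.2)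

/-- Basis function `sin(jx)·sin(kt)`. -/
def phiB (j k : ℕ) : ℝ × ℝ → ℝ := fun p => Real.sin (j * p.1) * Real.sin (k * p.2)

/-- The (normalized) Fourier coefficient of `u` against `sin(jx)cos(kt)`. -/
def coefA (j k : ℕ) (u : ℝ × ℝ → ℝ) : ℝ :=
  ((if k = 0 then 1 else 2) / Real.pi ^ 2) * ∫ p in Qset, u p * phiA j k p

/-- The (normalized) Fourier coefficient of `u` against `sin(jx)sin(kt)`. -/
def coefB (j k : ℕ) (u : ℝ × ℝ → ℝ) : ℝ :=
  (2 / Real.pi ^ 2) * ∫ p in Qset, u p * phiB j k p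

/-- `‖w⁺‖_E²`, the square of the `E`-norm of the `E⁺` (i.e. `k > j`) component of `u`. -/
def normPlusSq (u : ℝ × ℝ → ℝ) : ℝ :=
  Real.pi ^ 2 * ∑' jk : ℕ × ℕ,
    if jk.1 < jk.2 then
      |((jk.2 : ℝ) ^ 2 - (jk.1 : ℝ) ^ 2)| * ((coefA jk.1 jk.2 u) ^ 2 + (coefB jk.1 jk.2 u) ^ 2)
    else 0

/-- `‖w⁻‖_E²`, the square of the `E`-norm of the `E⁻` (i.e. `k < j`) component of `u`. -/
def normMinusSq (u : ℝ × ℝ → ℝ) : ℝ :=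
  Real.pi ^ 2 * ∑' jk : ℕ × ℕ,
    if jk.2 < jk.1 then
      |((jk.2 : ℝ) ^ 2 - (jk.1 : ℝ) ^ 2)| * ((coefA jk.1 jk.2 u) ^ 2 + (coefB jk.1 jk.2 u) ^ 2)
    else 0

/-- `‖w‖_E²`, the square of the full `E`-norm (over all `k ≠ j`). -/
def normESq (u : ℝ × ℝ → ℝ) : ℝ := normPlusSq u + normMinusSq u

/-- `‖v_t‖²_{L²(Q)}`, where `v` is the kernel (`k = j`) component of `u`. -/
def vtNormSq (u : ℝ × ℝ → ℝ) : ℝ :=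
  (Real.pi ^ 2 / 2) * ∑' j : ℕ, (j : ℝ) ^ 2 * ((coefA j j u) ^ 2 + (coefB j j u) ^ 2)

/-- `‖u‖_{β,E}² = ‖w⁺‖_E² + ‖w⁻‖_E² + β‖v_t‖²_{L²}`. -/
def normBetaSq (β : ℝ) (u : ℝ × ℝ → ℝ) : ℝ := normPlusSq u + normMinusSq u + β * vtNormSq u

/-- `‖u‖_{β,E}`. -/
def normBeta (β : ℝ) (u : ℝ × ℝ → ℝ) : ℝ := Real.sqrt (normBetaSq β u)

/-- `∫_Q |u|^r dx dt`. -/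
def intPow (r : ℝ) (u : ℝ × ℝ → ℝ) : ℝ := ∫ p in Qset, |u p| ^ r

/-- `∫_Q f·u dx dt`. -/
def intFU (f u : ℝ × ℝ → ℝ) : ℝ := ∫ p in Qset, f p * u p

/-- The functional `I_β`. -/
def Ibeta (s : ℝ) (f : ℝ × ℝ → ℝ) (β : ℝ) (u : ℝ × ℝ → ℝ) : ℝ :=
  (1 / 2) * (normPlusSq u - normMinusSq u - β * vtNormSq u)
    - (1 / (s + 1)) * intPow (s + 1) u - intFU f u

/-- `𝓘_β(u) = 2a₆(I_β(u)² + 1)`. -/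
def calI (s : ℝ) (f : ℝ × ℝ → ℝ) (a6 β : ℝ) (u : ℝ × ℝ → ℝ) : ℝ :=
  2 * a6 * ((Ibeta s f β u) ^ 2 + 1)

/-- The cutoff `ψ(u) = χ(𝓘_β(u)⁻¹·(1/(s+1))∫_Q|u|^{s+1})`. -/
def psiCut (s : ℝ) (f : ℝ × ℝ → ℝ) (a6 : ℝ) (χ : ℝ → ℝ) (β : ℝ) (u : ℝ × ℝ → ℝ) : ℝ :=
  χ ((calI s f a6 β u)⁻¹ * ((1 / (s + 1)) * intPow (s + 1) u))

/-- The truncated functional `J_β`. -/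
def Jbeta (s : ℝ) (f : ℝ × ℝ → ℝ) (a6 : ℝ) (χ : ℝ → ℝ) (β : ℝ) (u : ℝ × ℝ → ℝ) : ℝ :=
  (1 / 2) * (normPlusSq u - normMinusSq u - β * vtNormSq u)
    - (1 / (s + 1)) * intPow (s + 1) u - psiCut s f a6 χ β u * intFU f u

/-- Indices `(j, k, A/B)` of the eigenfunctions with positive eigenvalue: `1 ≤ j < k`. -/
def IdxSet : Set (ℕ × ℕ × Bool) := {i | 1 ≤ i.1 ∧ i.1 < i.2.1}

/-- The eigenfunction corresponding to an index. -/
def idxFun (i : ℕ × ℕ × Bool) : ℝ × ℝ → ℝ := if i.2.2 then phiA i.1 i.2.1 else phiB i.1 i.2.1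

/-- The eigenvalue `k² - j²` of an index. -/
def eigenval (i : ℕ × ℕ × Bool) : ℝ := (i.2.1 : ℝ) ^ 2 - (i.1 : ℝ) ^ 2

/-- `e` (0-indexed: `e_{l+1} = idxFun (e l)`) enumerates the positive-eigenvalue
eigenfunctions in nondecreasing order of `k² - j²`. -/
def IsEnum (e : ℕ → ℕ × ℕ × Bool) : Prop :=
  Function.Injective e ∧ Set.range e = IdxSet ∧
    ∀ l l' : ℕ, l ≤ l' → eigenval (e l) ≤ eigenval (e l')

/-- `E^{+n} = span{e₁, …, e_n}`. -/
def Eplus (e : ℕ → ℕ × ℕ × Bool) (n : ℕ) : Submodule ℝ (ℝ × ℝ → ℝ) :=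
  Submodule.span ℝ (idxFun '' (e '' {l | l < n}))

/-- `E^{-m} = span{sin(jx)cos(kt), sin(jx)sin(kt) : j + k ≤ m, 0 ≤ k < j}`. -/
def Eminus (m : ℕ) : Submodule ℝ (ℝ × ℝ → ℝ) :=
  Submodule.span ℝ {g | ∃ j k : ℕ, j + k ≤ m ∧ k < j ∧ (g = phiA j k ∨ g = phiB j k)}

/-- `N^m = span{sin(jx)cos(jt), sin(jx)sin(jt) : 1 ≤ j ≤ m}`. -/
def Nspace (m : ℕ) : Submodule ℝ (ℝ × ℝ → ℝ) :=
  Submodule.span ℝ {g | ∃ j : ℕ, 1 ≤ j ∧ j ≤ m ∧ (g = phiA j j ∨ g = phiB j j)}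

/-- `E^{+n} ⊕ E^{-m} ⊕ N^m`. -/
def Wnm (e : ℕ → ℕ × ℕ × Bool) (n m : ℕ) : Submodule ℝ (ℝ × ℝ → ℝ) :=
  Eplus e n ⊔ Eminus m ⊔ Nspace m

/-- `f` is `C²`, `2π`-periodic in `t`, and vanishes at `x = 0` and `x = π`. -/
def fAdmissible (f : ℝ × ℝ → ℝ) : Prop :=
  ContDiff ℝ 2 f ∧ (∀ x t : ℝ, f (x, t + 2 * Real.pi) = f (x, t)) ∧
    ∀ t : ℝ, f (0, t) = 0 ∧ f (Real.pi, t) = 0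

/-- The cutoff function `χ`: smooth, `χ = 1` on `(-∞,1]`, `χ = 0` on `[2,∞)`,
and `-2 < χ' < 0` on `(1,2)`. -/
def chiAdmissible (χ : ℝ → ℝ) : Prop :=
  ContDiff ℝ (⊤ : ℕ∞) χ ∧ (∀ t : ℝ, t ≤ 1 → χ t = 1) ∧ (∀ t : ℝ, 2 ≤ t → χ t = 0) ∧
    ∀ t : ℝ, 1 < t → t < 2 → -2 < deriv χ t ∧ deriv χ t < 0

section Helpers
open MeasureTheory intervalIntegral Real

lemma cosPiInt (m : ℤ) (hm : m ≠ 0) : ∫ x in (0:ℝ)..Real.pi, Real.cos (m*x) = 0 := by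
  rw [intervalIntegral.integral_comp_mul_left (fun x => Real.cos x) (by exact_mod_cast hm)]
  simp [Real.sin_int_mul_pi]

lemma cos2PiInt (m : ℤ) (hm : m ≠ 0) : ∫ x in (0:ℝ)..(2*Real.pi), Real.cos (m*x) = 0 := by
  rw [intervalIntegral.integral_comp_mul_left (fun x => Real.cos x) (by exact_mod_cast hm)]
  have h2 : Real.sin (↑m * (Real.pi * 2)) = 0 := by
    have : (m:ℝ) * (Real.pi * 2) = (2*m : ℤ) * Real.pi := by push_cast; ring
    rw [this, Real.sin_int_mul_pi]
  simp [h2, mul_comm]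

lemma sin2PiInt (m : ℤ) : ∫ x in (0:ℝ)..(2*Real.pi), Real.sin (m*x) = 0 := by
  rcases eq_or_ne m 0 with h | h
  · simp [h]
  rw [intervalIntegral.integral_comp_mul_left (fun x => Real.sin x) (by exact_mod_cast h)]
  have h2 : Real.cos (↑m * (Real.pi * 2)) = 1 := by
    have : (m:ℝ) * (Real.pi * 2) = (m : ℤ) * (2 * Real.pi) := by push_cast; ring
    rw [this, Real.cos_int_mul_two_pi]
  simp [h2, mul_comm]

lemma setIoo_eq_interval (f : ℝ → ℝ) (a b : ℝ) (hab : a ≤ b) :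
    ∫ x in Set.Ioo a b, f x = ∫ x in a..b, f x := by
  rw [intervalIntegral.integral_of_le hab, MeasureTheory.integral_Ioc_eq_integral_Ioo]

lemma sinsin_eq (a b x : ℝ) :
    Real.sin (a*x) * Real.sin (b*x) = (Real.cos ((a-b)*x) - Real.cos ((a+b)*x))/2 := by
  rw [sub_mul, add_mul, Real.cos_sub, Real.cos_add]; ring

lemma coscos_eq (a b x : ℝ) :
    Real.cos (a*x) * Real.cos (b*x) = (Real.cos ((a-b)*x) + Real.cos ((a+b)*x))/2 := by
  rw [sub_mul, add_mul, Real.cos_sub, Real.cos_add]; ring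

lemma sincos_eq (a b x : ℝ) :
    Real.sin (a*x) * Real.cos (b*x) = (Real.sin ((a+b)*x) + Real.sin ((a-b)*x))/2 := by
  rw [sub_mul, add_mul, Real.sin_sub, Real.sin_add]; ring

lemma sinI (j j' : ℕ) (h : j ≠ j') :
    ∫ x in Set.Ioo (0:ℝ) Real.pi, Real.sin (j*x) * Real.sin (j'*x) = 0 := by
  rw [setIoo_eq_interval _ _ _ Real.pi_pos.le]
  rcases Nat.eq_zero_or_pos j with hj | hj
  · simp [hj]
  rcases Nat.eq_zero_or_pos j' with hj' | hj'
  · simp [hj']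
  have e1 : ∀ x : ℝ, Real.sin (j*x) * Real.sin (j'*x)
      = (Real.cos ((Int.cast ((j:ℤ)-(j':ℤ)) : ℝ)*x) - Real.cos ((Int.cast ((j:ℤ)+(j':ℤ)) : ℝ)*x))/2 := by
    intro x; push_cast; exact sinsin_eq _ _ x
  simp_rw [e1]
  rw [intervalIntegral.integral_div, intervalIntegral.integral_sub
    (Continuous.intervalIntegrable (by fun_prop) _ _)
    (Continuous.intervalIntegrable (by fun_prop) _ _)]
  rw [cosPiInt _ (by exact_mod_cast sub_ne_zero.mpr (by exact_mod_cast h : (j:ℤ) ≠ j')),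
    cosPiInt _ (by positivity)]
  norm_num

lemma coscosI (k k' : ℕ) (h : k ≠ k') :
    ∫ x in Set.Ioo (0:ℝ) (2*Real.pi), Real.cos (k*x) * Real.cos (k'*x) = 0 := by
  rw [setIoo_eq_interval _ _ _ (by positivity)]
  have e1 : ∀ x : ℝ, Real.cos (k*x) * Real.cos (k'*x)
      = (Real.cos ((Int.cast ((k:ℤ)-(k':ℤ)) : ℝ)*x) + Real.cos ((Int.cast ((k:ℤ)+(k':ℤ)) : ℝ)*x))/2 := by
    intro x; push_cast; exact coscos_eq _ _ x
  simp_rw [e1]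
  rw [intervalIntegral.integral_div, intervalIntegral.integral_add
    (Continuous.intervalIntegrable (by fun_prop) _ _)
    (Continuous.intervalIntegrable (by fun_prop) _ _)]
  have hne : ((k:ℤ) - k') ≠ 0 := sub_ne_zero.mpr (by exact_mod_cast h)
  rcases Nat.eq_zero_or_pos (k + k') with hz | hz
  · omega
  rw [cos2PiInt _ hne, cos2PiInt _ (by exact_mod_cast hz.ne')]
  norm_num

lemma sinsinI (k k' : ℕ) (h : k ≠ k') :
    ∫ x in Set.Ioo (0:ℝ) (2*Real.pi), Real.sin (k*x) * Real.sin (k'*x) = 0 := by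
  rw [setIoo_eq_interval _ _ _ (by positivity)]
  rcases Nat.eq_zero_or_pos k with hk | hk
  · simp [hk]
  rcases Nat.eq_zero_or_pos k' with hk' | hk'
  · simp [hk']
  have e1 : ∀ x : ℝ, Real.sin (k*x) * Real.sin (k'*x)
      = (Real.cos ((Int.cast ((k:ℤ)-(k':ℤ)) : ℝ)*x) - Real.cos ((Int.cast ((k:ℤ)+(k':ℤ)) : ℝ)*x))/2 := by
    intro x; push_cast; exact sinsin_eq _ _ x
  simp_rw [e1]
  rw [intervalIntegral.integral_div, intervalIntegral.integral_sub
    (Continuous.intervalIntegrable (by fun_prop) _ _)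
    (Continuous.intervalIntegrable (by fun_prop) _ _)]
  rw [cos2PiInt _ (sub_ne_zero.mpr (by exact_mod_cast h)), cos2PiInt _ (by positivity)]
  norm_num

lemma sincosI (k k' : ℕ) :
    ∫ x in Set.Ioo (0:ℝ) (2*Real.pi), Real.sin (k*x) * Real.cos (k'*x) = 0 := by
  rw [setIoo_eq_interval _ _ _ (by positivity)]
  have e1 : ∀ x : ℝ, Real.sin (k*x) * Real.cos (k'*x)
      = (Real.sin ((Int.cast ((k:ℤ)+(k':ℤ)) : ℝ)*x) + Real.sin ((Int.cast ((k:ℤ)-(k':ℤ)) : ℝ)*x))/2 := by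
    intro x; push_cast; exact sincos_eq _ _ x
  simp_rw [e1]
  rw [intervalIntegral.integral_div, intervalIntegral.integral_add
    (Continuous.intervalIntegrable (by fun_prop) _ _)
    (Continuous.intervalIntegrable (by fun_prop) _ _)]
  rw [sin2PiInt, sin2PiInt]
  norm_num

lemma measurableSet_Qset : MeasurableSet Qset :=
  (measurableSet_Ioo).prod measurableSet_Ioo

lemma volQ_ne_top : volume Qset ≠ ⊤ := by
  rw [Qset, MeasureTheory.Measure.volume_eq_prod, MeasureTheory.Measure.prod_prod, Real.volume_Ioo, Real.volume_Ioo]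
  exact ENNReal.mul_ne_top ENNReal.ofReal_ne_top ENNReal.ofReal_ne_top

lemma volQ_toReal : (volume Qset).toReal = 2 * Real.pi ^ 2 := by
  rw [Qset, MeasureTheory.Measure.volume_eq_prod, MeasureTheory.Measure.prod_prod, Real.volume_Ioo, Real.volume_Ioo,
    ENNReal.toReal_mul, ENNReal.toReal_ofReal (by nlinarith [Real.pi_pos]), ENNReal.toReal_ofReal (by nlinarith [Real.pi_pos])]
  ring

lemma volQ_toReal_pos : 0 < (volume Qset).toReal := by
  rw [volQ_toReal]; positivity

lemma integrableOn_bdd {g : ℝ × ℝ → ℝ} (hg : Continuous g) {C : ℝ}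
    (hC : ∀ p ∈ Qset, |g p| ≤ C) : IntegrableOn g Qset := by
  apply MeasureTheory.Measure.integrableOn_of_bounded volQ_ne_top hg.aestronglyMeasurable
  filter_upwards [ae_restrict_mem measurableSet_Qset] with p hp
  simpa [Real.norm_eq_abs] using hC p hp

lemma prodSplit (F G : ℝ → ℝ) :
    ∫ p in Qset, F p.1 * G p.2
      = (∫ x in Set.Ioo (0:ℝ) Real.pi, F x) * ∫ t in Set.Ioo (0:ℝ) (2*Real.pi), G t := by
  rw [Qset, MeasureTheory.Measure.volume_eq_prod]
  exact MeasureTheory.setIntegral_prod_mul F G _ _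

lemma phiA_cont (j k : ℕ) : Continuous (phiA j k) := by
  unfold phiA; fun_prop

lemma phiB_cont (j k : ℕ) : Continuous (phiB j k) := by
  unfold phiB; fun_prop

lemma phiA_bdd (j k : ℕ) (p : ℝ × ℝ) : |phiA j k p| ≤ 1 := by
  rw [phiA, abs_mul]
  exact mul_le_one₀ (Real.abs_sin_le_one _) (abs_nonneg _) (Real.abs_cos_le_one _)

lemma phiB_bdd (j k : ℕ) (p : ℝ × ℝ) : |phiB j k p| ≤ 1 := by
  rw [phiB, abs_mul]
  exact mul_le_one₀ (Real.abs_sin_le_one _) (abs_nonneg _) (Real.abs_sin_le_one _)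

lemma orthoAA (j' k' j k : ℕ) (h : (j', k') ≠ (j, k)) :
    ∫ p in Qset, phiA j' k' p * phiA j k p = 0 := by
  have e : Set.EqOn (fun p : ℝ × ℝ => phiA j' k' p * phiA j k p)
      (fun p : ℝ × ℝ => (fun x => Real.sin (j'*x) * Real.sin (j*x)) p.1
        * (fun t => Real.cos (k'*t) * Real.cos (k*t)) p.2) Qset := by
    intro p _; simp only [phiA]; ring
  rw [MeasureTheory.setIntegral_congr_fun measurableSet_Qset e,
    prodSplit (fun x => Real.sin (j'*x) * Real.sin (j*x)) (fun t => Real.cos (k'*t) * Real.cos (k*t))]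
  by_cases hj : j' = j
  · have hk : k' ≠ k := by simp [hj] at h; exact h
    rw [coscosI k' k hk, mul_zero]
  · rw [sinI j' j hj, zero_mul]

lemma orthoBA (j' k' j k : ℕ) :
    ∫ p in Qset, phiB j' k' p * phiA j k p = 0 := by
  have e : Set.EqOn (fun p : ℝ × ℝ => phiB j' k' p * phiA j k p)
      (fun p : ℝ × ℝ => (fun x => Real.sin (j'*x) * Real.sin (j*x)) p.1
        * (fun t => Real.sin (k'*t) * Real.cos (k*t)) p.2) Qset := by
    intro p _; simp only [phiA, phiB]; ring
  rw [MeasureTheory.setIntegral_congr_fun measurableSet_Qset e,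
    prodSplit (fun x => Real.sin (j'*x) * Real.sin (j*x)) (fun t => Real.sin (k'*t) * Real.cos (k*t)),
    sincosI k' k, mul_zero]

lemma orthoAB (j' k' j k : ℕ) :
    ∫ p in Qset, phiA j' k' p * phiB j k p = 0 := by
  have e : Set.EqOn (fun p : ℝ × ℝ => phiA j' k' p * phiB j k p)
      (fun p : ℝ × ℝ => (fun x => Real.sin (j'*x) * Real.sin (j*x)) p.1
        * (fun t => Real.sin (k*t) * Real.cos (k'*t)) p.2) Qset := by
    intro p _; simp only [phiA, phiB]; ring
  rw [MeasureTheory.setIntegral_congr_fun measurableSet_Qset e,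
    prodSplit (fun x => Real.sin (j'*x) * Real.sin (j*x)) (fun t => Real.sin (k*t) * Real.cos (k'*t)),
    sincosI k k', mul_zero]

lemma orthoBB (j' k' j k : ℕ) (h : (j', k') ≠ (j, k)) :
    ∫ p in Qset, phiB j' k' p * phiB j k p = 0 := by
  have e : Set.EqOn (fun p : ℝ × ℝ => phiB j' k' p * phiB j k p)
      (fun p : ℝ × ℝ => (fun x => Real.sin (j'*x) * Real.sin (j*x)) p.1
        * (fun t => Real.sin (k'*t) * Real.sin (k*t)) p.2) Qset := by
    intro p _; simp only [phiB]; ring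
  rw [MeasureTheory.setIntegral_congr_fun measurableSet_Qset e,
    prodSplit (fun x => Real.sin (j'*x) * Real.sin (j*x)) (fun t => Real.sin (k'*t) * Real.sin (k*t))]
  by_cases hj : j' = j
  · have hk : k' ≠ k := by simp [hj] at h; exact h
    rw [sinsinI k' k hk, mul_zero]
  · rw [sinI j' j hj, zero_mul]

def GoodFor (S : Set (ℕ × ℕ)) (u : ℝ × ℝ → ℝ) : Prop :=
  Continuous u ∧ (∃ C, ∀ p, |u p| ≤ C) ∧
    ∀ j k : ℕ, j < k → (j, k) ∉ S →
      (∫ p in Qset, u p * phiA j k p) = 0 ∧ (∫ p in Qset, u p * phiB j k p) = 0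

lemma integrableOn_mul_phi {u : ℝ × ℝ → ℝ} (hu : Continuous u) {C : ℝ}
    (hC : ∀ p, |u p| ≤ C) {φ : ℝ × ℝ → ℝ} (hφc : Continuous φ) (hφb : ∀ p, |φ p| ≤ 1) :
    IntegrableOn (fun p => u p * φ p) Qset := by
  apply integrableOn_bdd (hu.mul hφc) (C := C)
  intro p _
  rw [Pi.mul_apply, abs_mul]
  exact le_trans (mul_le_of_le_one_right (abs_nonneg _) (hφb p)) (hC p)

lemma good_zero (S : Set (ℕ × ℕ)) : GoodFor S (0 : ℝ × ℝ → ℝ) :=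
  ⟨continuous_const, ⟨0, fun p => by simp⟩, fun j k _ _ => by simp⟩

lemma good_add (S : Set (ℕ × ℕ)) {u v : ℝ × ℝ → ℝ} (hu : GoodFor S u) (hv : GoodFor S v) :
    GoodFor S (u + v) := by
  obtain ⟨huc, ⟨Cu, hCu⟩, hucoef⟩ := hu
  obtain ⟨hvc, ⟨Cv, hCv⟩, hvcoef⟩ := hv
  refine ⟨huc.add hvc, ⟨Cu + Cv, fun p => ?_⟩, fun j k hjk hS => ?_⟩
  · calc |(u + v) p| = |u p + v p| := rfl
      _ ≤ |u p| + |v p| := abs_add_le _ _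
      _ ≤ Cu + Cv := add_le_add (hCu p) (hCv p)
  constructor
  · have : ∀ p : ℝ × ℝ, (u + v) p * phiA j k p = u p * phiA j k p + v p * phiA j k p := by
      intro p; simp [Pi.add_apply]; ring
    simp_rw [this]
    rw [MeasureTheory.integral_add
      (integrableOn_mul_phi huc hCu (phiA_cont j k) (phiA_bdd j k))
      (integrableOn_mul_phi hvc hCv (phiA_cont j k) (phiA_bdd j k)),
      (hucoef j k hjk hS).1, (hvcoef j k hjk hS).1, add_zero]
  · have : ∀ p : ℝ × ℝ, (u + v) p * phiB j k p = u p * phiB j k p + v p * phiB j k p := by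
      intro p; simp [Pi.add_apply]; ring
    simp_rw [this]
    rw [MeasureTheory.integral_add
      (integrableOn_mul_phi huc hCu (phiB_cont j k) (phiB_bdd j k))
      (integrableOn_mul_phi hvc hCv (phiB_cont j k) (phiB_bdd j k)),
      (hucoef j k hjk hS).2, (hvcoef j k hjk hS).2, add_zero]

lemma good_smul (S : Set (ℕ × ℕ)) (c : ℝ) {u : ℝ × ℝ → ℝ} (hu : GoodFor S u) :
    GoodFor S (c • u) := by
  obtain ⟨huc, ⟨Cu, hCu⟩, hucoef⟩ := hu
  refine ⟨continuous_const.mul huc, ⟨|c| * Cu, fun p => ?_⟩, fun j k hjk hS => ?_⟩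
  · calc |(c • u) p| = |c| * |u p| := by simp [abs_mul]
      _ ≤ |c| * Cu := by
        exact mul_le_mul_of_nonneg_left (hCu p) (abs_nonneg c)
  constructor
  · have : ∀ p : ℝ × ℝ, (c • u) p * phiA j k p = c * (u p * phiA j k p) := by
      intro p; simp [Pi.smul_apply]; ring
    simp_rw [this]
    rw [MeasureTheory.integral_const_mul, (hucoef j k hjk hS).1, mul_zero]
  · have : ∀ p : ℝ × ℝ, (c • u) p * phiB j k p = c * (u p * phiB j k p) := by
      intro p; simp [Pi.smul_apply]; ring
    simp_rw [this]
    rw [MeasureTheory.integral_const_mul, (hucoef j k hjk hS).2, mul_zero]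

lemma good_phi (S : Set (ℕ × ℕ)) (j' k' : ℕ)
    (hne : ∀ j k : ℕ, j < k → (j, k) ∉ S → (j', k') ≠ (j, k)) (b : Bool) :
    GoodFor S (if b then phiA j' k' else phiB j' k') := by
  cases b
  · simp only [Bool.false_eq_true, if_false]
    exact ⟨phiB_cont j' k', ⟨1, phiB_bdd j' k'⟩, fun j k hjk hS =>
      ⟨orthoBA j' k' j k, orthoBB j' k' j k (hne j k hjk hS)⟩⟩
  · simp only [if_true]
    exact ⟨phiA_cont j' k', ⟨1, phiA_bdd j' k'⟩, fun j k hjk hS =>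
      ⟨orthoAA j' k' j k (hne j k hjk hS), orthoAB j' k' j k⟩⟩

/-- the set of "allowed" pairs for `E^{+n}` -/
def pairsn (e : ℕ → ℕ × ℕ × Bool) (n : ℕ) : Set (ℕ × ℕ) :=
  {q | ∃ l, l < n ∧ ((e l).1, (e l).2.1) = q}

lemma good_of_mem_Wnm (e : ℕ → ℕ × ℕ × Bool) (n m : ℕ) {u : ℝ × ℝ → ℝ}
    (hu : u ∈ Wnm e n m) : GoodFor (pairsn e n) u := by
  set S := pairsn e n
  set G : Set (ℝ × ℝ → ℝ) :=
    (idxFun '' (e '' {l | l < n})) ∪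
      ({g | ∃ j k : ℕ, j + k ≤ m ∧ k < j ∧ (g = phiA j k ∨ g = phiB j k)} ∪
        {g | ∃ j : ℕ, 1 ≤ j ∧ j ≤ m ∧ (g = phiA j j ∨ g = phiB j j)}) with hG
  have husp : u ∈ Submodule.span ℝ G := by
    refine SetLike.le_def.mp ?_ hu
    rw [Wnm]
    refine sup_le (sup_le ?_ ?_) ?_ <;>
      refine Submodule.span_mono ?_
    · exact Set.subset_union_left
    · exact Set.subset_union_of_subset_right Set.subset_union_left _
    · exact Set.subset_union_of_subset_right Set.subset_union_right _
  refine Submodule.span_induction (p := fun g _ => GoodFor S g) ?_ (good_zero S)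
    (fun x y _ _ hx hy => good_add S hx hy) (fun c x _ hx => good_smul S c hx) husp
  rintro g (⟨i, ⟨l, hl, rfl⟩, rfl⟩ | (⟨j', k', _, hkj, hg⟩ | ⟨j', hj1, _, hg⟩))
  · have : GoodFor S (if (e l).2.2 then phiA (e l).1 (e l).2.1 else phiB (e l).1 (e l).2.1) := by
      apply good_phi
      intro j k hjk hS heq
      exact hS ⟨l, hl, heq⟩
    simpa [idxFun] using this
  · have hne : ∀ j k : ℕ, j < k → (j, k) ∉ S → (j', k') ≠ (j, k) := by
      rintro j k hjk _ heq
      rw [Prod.mk.injEq] at heq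
      omega
    rcases hg with rfl | rfl
    · simpa using good_phi S j' k' hne true
    · simpa using good_phi S j' k' hne false
  · have hne : ∀ j k : ℕ, j < k → (j, k) ∉ S → (j', j') ≠ (j, k) := by
      rintro j k hjk _ heq
      rw [Prod.mk.injEq] at heq
      omega
    rcases hg with rfl | rfl
    · simpa using good_phi S j' j' hne true
    · simpa using good_phi S j' j' hne false

lemma coef_vanish (e : ℕ → ℕ × ℕ × Bool) (n m : ℕ) {u : ℝ × ℝ → ℝ} (hu : u ∈ Wnm e n m)
    {j k : ℕ} (hjk : j < k) (hS : (j, k) ∉ pairsn e n) :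
    coefA j k u = 0 ∧ coefB j k u = 0 := by
  obtain ⟨-, -, h⟩ := good_of_mem_Wnm e n m hu
  obtain ⟨h1, h2⟩ := h j k hjk hS
  rw [coefA, coefB, h1, h2, mul_zero, mul_zero]
  exact ⟨rfl, rfl⟩

lemma young {p : ℝ} (hp : 1 < p) {ε : ℝ} (hε : 0 < ε) {x : ℝ} (hx : 0 ≤ x) :
    x ≤ (1/ε) ^ (1/(p-1)) + ε * x ^ p := by
  set K : ℝ := (1/ε) ^ (1/(p-1)) with hK
  have hKpos : 0 < K := Real.rpow_pos_of_pos (by positivity) _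
  by_cases hxK : x ≤ K
  · have : 0 ≤ ε * x ^ p := by positivity
    linarith
  · push_neg at hxK
    have hxpos : 0 < x := lt_trans hKpos hxK
    have h1 : K ^ (p-1) ≤ x ^ (p-1) :=
      Real.rpow_le_rpow hKpos.le hxK.le (by linarith)
    have h2 : K ^ (p-1) = 1/ε := by
      rw [hK, ← Real.rpow_mul (by positivity), one_div (p-1), inv_mul_cancel₀ (by linarith :
        p - 1 ≠ 0), Real.rpow_one]
    have h3 : x ^ p = x * x ^ (p-1) := by
      rw [← Real.rpow_one_add' hxpos.le (by nlinarith : (1:ℝ) + (p-1) ≠ 0)]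
      ring_nf
    have h4 : x ≤ ε * x ^ p := by
      rw [h3]
      have : 1/ε ≤ x ^ (p-1) := h2 ▸ h1
      calc x = ε * (x * (1/ε)) := by field_simp
        _ ≤ ε * (x * x ^ (p-1)) := by
            apply mul_le_mul_of_nonneg_left _ hε.le
            exact mul_le_mul_of_nonneg_left this hxpos.le
    have : 0 < K := hKpos
    linarith

lemma cauchySchwarzQ {g : ℝ × ℝ → ℝ} (hg : IntegrableOn g Qset)
    (hg2 : IntegrableOn (fun p => g p ^ 2) Qset) :
    (∫ p in Qset, g p) ^ 2 ≤ (volume Qset).toReal * ∫ p in Qset, g p ^ 2 := by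
  set V : ℝ := (volume Qset).toReal with hVdef
  have hV : 0 < V := volQ_toReal_pos
  set I : ℝ := ∫ p in Qset, g p with hI
  set a : ℝ := I / V with ha
  have haV : a * V = I := by rw [ha, div_mul_cancel₀ _ hV.ne']
  have h0 : (0:ℝ) ≤ ∫ p in Qset, (g p - a) ^ 2 :=
    MeasureTheory.setIntegral_nonneg measurableSet_Qset (fun p _ => sq_nonneg _)
  have e : ∀ p : ℝ × ℝ, (g p - a) ^ 2 = (g p ^ 2 - 2 * a * g p) + a ^ 2 := by
    intro p; ring
  have hconst : IntegrableOn (fun _ : ℝ × ℝ => a ^ 2) Qset :=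
    MeasureTheory.integrableOn_const volQ_ne_top
  have hexp : ∫ p in Qset, (g p - a) ^ 2
      = (∫ p in Qset, g p ^ 2) - 2 * a * I + a ^ 2 * V := by
    simp_rw [e]
    rw [MeasureTheory.integral_add
      (show IntegrableOn (fun p => g p ^ 2 - 2 * a * g p) Qset volume from
        hg2.sub (hg.const_mul (2*a))) hconst,
      MeasureTheory.integral_sub hg2 (hg.const_mul (2*a)),
      MeasureTheory.integral_const_mul, MeasureTheory.setIntegral_const]
    simp [smul_eq_mul, ← hI]
    rw [MeasureTheory.measureReal_def, ← hVdef]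
    ring
  rw [hexp] at h0
  have h6 : a ^ 2 * V = a * I := by rw [← haV]; ring
  have hk : 0 ≤ (∫ p in Qset, g p ^ 2) - a ^ 2 * V := by
    have : a ^ 2 * V - 2 * a * I + a ^ 2 * V = 0 := by rw [h6]; ring
    linarith
  have h5 : 0 ≤ V * ((∫ p in Qset, g p ^ 2) - a ^ 2 * V) := mul_nonneg hV.le hk
  have h7 : I ^ 2 = a ^ 2 * V ^ 2 := by rw [← haV]; ring
  nlinarith [h5, h7]

lemma intPow_nonneg (r : ℝ) (u : ℝ × ℝ → ℝ) : 0 ≤ intPow r u :=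
  MeasureTheory.setIntegral_nonneg measurableSet_Qset
    (fun p _ => Real.rpow_nonneg (abs_nonneg _) _)

lemma integrableOn_abs {u : ℝ × ℝ → ℝ} (huc : Continuous u) {C : ℝ} (hC : ∀ p, |u p| ≤ C) :
    IntegrableOn (fun p => |u p|) Qset :=
  integrableOn_bdd (continuous_abs.comp huc) (C := C) (fun p _ => by simpa using hC p)

lemma integrableOn_sq {u : ℝ × ℝ → ℝ} (huc : Continuous u) {C : ℝ} (hC : ∀ p, |u p| ≤ C) :
    IntegrableOn (fun p => u p ^ 2) Qset := by
  apply integrableOn_bdd (by fun_prop) (C := C^2)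
  intro p _
  rw [abs_pow]
  exact pow_le_pow_left₀ (abs_nonneg _) (hC p) 2

lemma integrableOn_rpow {u : ℝ × ℝ → ℝ} (huc : Continuous u) {C : ℝ} (hC : ∀ p, |u p| ≤ C)
    {r : ℝ} (hr : 0 ≤ r) : IntegrableOn (fun p => |u p| ^ r) Qset := by
  apply integrableOn_bdd
    ((continuous_abs.comp huc).rpow_const (fun p => Or.inr hr)) (C := C ^ r)
  intro p _
  simp only [Function.comp_apply]
  rw [abs_of_nonneg (Real.rpow_nonneg (abs_nonneg _) _)]
  exact Real.rpow_le_rpow (abs_nonneg _) (hC p) hr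

/-- integral Young bound: `∫|u| ≤ c·V + ε·∫|u|^{s+1}` -/
lemma int_abs_le {s : ℝ} (hs : 1 < s) {u : ℝ × ℝ → ℝ} (huc : Continuous u) {C : ℝ}
    (hC : ∀ p, |u p| ≤ C) {ε : ℝ} (hε : 0 < ε) :
    ∫ p in Qset, |u p| ≤ (1/ε) ^ (1/s) * (volume Qset).toReal + ε * intPow (s+1) u := by
  have key : ∀ p ∈ Qset, |u p| ≤ (1/ε) ^ (1/s) + ε * |u p| ^ (s+1) := by
    intro p _
    have := young (p := s+1) (by linarith) hε (abs_nonneg (u p))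
    simpa using this
  calc ∫ p in Qset, |u p| ≤ ∫ p in Qset, ((1/ε) ^ (1/s) + ε * |u p| ^ (s+1)) := by
        apply MeasureTheory.setIntegral_mono_on (integrableOn_abs huc hC)
          ((MeasureTheory.integrableOn_const volQ_ne_top).add
            ((integrableOn_rpow huc hC (by linarith)).const_mul ε))
          measurableSet_Qset key
    _ = (1/ε) ^ (1/s) * (volume Qset).toReal + ε * intPow (s+1) u := by
        have h1 : IntegrableOn (fun _ : ℝ × ℝ => (1/ε) ^ (1/s)) Qset :=
          MeasureTheory.integrableOn_const volQ_ne_top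
        have h2 := ((integrableOn_rpow huc hC (r := s+1) (by linarith)).const_mul ε)
        rw [MeasureTheory.integral_add h1 h2,
          MeasureTheory.setIntegral_const, MeasureTheory.integral_const_mul, intPow]
        simp [smul_eq_mul, mul_comm, MeasureTheory.measureReal_def]

/-- integral Young bound: `∫u² ≤ c·V + ε·∫|u|^{s+1}` -/
lemma int_sq_le {s : ℝ} (hs : 1 < s) {u : ℝ × ℝ → ℝ} (huc : Continuous u) {C : ℝ}
    (hC : ∀ p, |u p| ≤ C) {ε : ℝ} (hε : 0 < ε) :
    ∫ p in Qset, u p ^ 2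
      ≤ (1/ε) ^ (1/((s+1)/2-1)) * (volume Qset).toReal + ε * intPow (s+1) u := by
  have key : ∀ p ∈ Qset, u p ^ 2 ≤ (1/ε) ^ (1/((s+1)/2-1)) + ε * |u p| ^ (s+1) := by
    intro p _
    have h := young (p := (s+1)/2) (by linarith) hε (sq_nonneg (u p))
    have e2 : (u p ^ 2) ^ ((s+1)/2) = |u p| ^ (s+1) := by
      rw [← sq_abs (u p), ← Real.rpow_natCast |u p| 2, ← Real.rpow_mul (abs_nonneg _)]
      norm_num
      ring_nf
    rwa [e2] at h
  calc ∫ p in Qset, u p ^ 2 ≤ ∫ p in Qset, ((1/ε) ^ (1/((s+1)/2-1)) + ε * |u p| ^ (s+1)) := by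
        apply MeasureTheory.setIntegral_mono_on (integrableOn_sq huc hC)
          ((MeasureTheory.integrableOn_const volQ_ne_top).add
            ((integrableOn_rpow huc hC (by linarith)).const_mul ε))
          measurableSet_Qset key
    _ = (1/ε) ^ (1/((s+1)/2-1)) * (volume Qset).toReal + ε * intPow (s+1) u := by
        have h1 : IntegrableOn (fun _ : ℝ × ℝ => (1/ε) ^ (1/((s+1)/2-1))) Qset :=
          MeasureTheory.integrableOn_const volQ_ne_top
        have h2 := ((integrableOn_rpow huc hC (r := s+1) (by linarith)).const_mul ε)
        rw [MeasureTheory.integral_add h1 h2,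
          MeasureTheory.setIntegral_const, MeasureTheory.integral_const_mul, intPow]
        simp [smul_eq_mul, mul_comm, MeasureTheory.measureReal_def]

lemma abs_setIntegral_mul_le {u φ : ℝ × ℝ → ℝ} (huc : Continuous u) {C : ℝ}
    (hC : ∀ p, |u p| ≤ C) (hφc : Continuous φ) (hφb : ∀ p, |φ p| ≤ 1) :
    |∫ p in Qset, u p * φ p| ≤ ∫ p in Qset, |u p| := by
  calc |∫ p in Qset, u p * φ p| ≤ ∫ p in Qset, |u p * φ p| := by
        have h := MeasureTheory.norm_integral_le_integral_norm (μ := volume.restrict Qset)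
          (fun p => u p * φ p)
        simp only [Real.norm_eq_abs] at h
        exact h
    _ ≤ ∫ p in Qset, |u p| := by
        apply MeasureTheory.setIntegral_mono_on
          ((integrableOn_mul_phi huc hC hφc hφb).abs) (integrableOn_abs huc hC)
          measurableSet_Qset
        intro p _
        rw [abs_mul]
        exact mul_le_of_le_one_right (abs_nonneg _) (hφb p)

lemma coefA_abs_le {u : ℝ × ℝ → ℝ} (huc : Continuous u) {C : ℝ}
    (hC : ∀ p, |u p| ≤ C) (j k : ℕ) :
    |coefA j k u| ≤ 2 / Real.pi ^ 2 * ∫ p in Qset, |u p| := by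
  have hI := abs_setIntegral_mul_le huc hC (phiA_cont j k) (phiA_bdd j k)
  have hInn : (0:ℝ) ≤ ∫ p in Qset, |u p| :=
    MeasureTheory.setIntegral_nonneg measurableSet_Qset (fun p _ => abs_nonneg _)
  rw [coefA, abs_mul]
  have hw : |(if k = 0 then (1:ℝ) else 2) / Real.pi ^ 2| ≤ 2 / Real.pi ^ 2 := by
    rw [abs_of_nonneg (by positivity)]
    apply div_le_div_of_nonneg_right ?_ (by positivity) |>.trans_eq rfl
    split <;> norm_num
  calc |(if k = 0 then (1:ℝ) else 2) / Real.pi ^ 2| * |∫ p in Qset, u p * phiA j k p|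
      ≤ (2 / Real.pi ^ 2) * ∫ p in Qset, |u p| :=
        mul_le_mul hw hI (abs_nonneg _) (by positivity)

lemma coefB_abs_le {u : ℝ × ℝ → ℝ} (huc : Continuous u) {C : ℝ}
    (hC : ∀ p, |u p| ≤ C) (j k : ℕ) :
    |coefB j k u| ≤ 2 / Real.pi ^ 2 * ∫ p in Qset, |u p| := by
  have hI := abs_setIntegral_mul_le huc hC (phiB_cont j k) (phiB_bdd j k)
  rw [coefB, abs_mul]
  have hw : |(2:ℝ) / Real.pi ^ 2| = 2 / Real.pi ^ 2 := abs_of_nonneg (by positivity)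
  rw [hw]
  exact mul_le_mul_of_nonneg_left hI (by positivity)

lemma intFU_abs_le {u : ℝ × ℝ → ℝ} (huc : Continuous u) {C : ℝ} (hC : ∀ p, |u p| ≤ C)
    {f : ℝ × ℝ → ℝ} (hfc : Continuous f) {M : ℝ} (hM : ∀ p ∈ Qset, |f p| ≤ M) :
    |intFU f u| ≤ M * ∫ p in Qset, |u p| := by
  have hMnn : 0 ≤ M := le_trans (abs_nonneg _) (hM (Real.pi/2, Real.pi) (by
    constructor <;> constructor <;> nlinarith [Real.pi_pos]))
  have hfu : IntegrableOn (fun p => f p * u p) Qset := by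
    apply integrableOn_bdd (hfc.mul huc) (C := M * C)
    intro p hp
    rw [Pi.mul_apply, abs_mul]
    exact mul_le_mul (hM p hp) (hC p) (abs_nonneg _) hMnn
  calc |intFU f u| ≤ ∫ p in Qset, |f p * u p| := by
        have h := MeasureTheory.norm_integral_le_integral_norm (μ := volume.restrict Qset)
          (fun p => f p * u p)
        simp only [Real.norm_eq_abs] at h
        rw [intFU]
        exact h
    _ ≤ ∫ p in Qset, M * |u p| := by
        apply MeasureTheory.setIntegral_mono_on hfu.abs
          ((integrableOn_abs huc hC).const_mul M) measurableSet_Qset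
        intro p hp
        rw [abs_mul]
        exact mul_le_mul_of_nonneg_right (hM p hp) (abs_nonneg _)
    _ = M * ∫ p in Qset, |u p| := MeasureTheory.integral_const_mul M _

lemma chi_bounds {χ : ℝ → ℝ} (hχ : chiAdmissible χ) (t : ℝ) : 0 ≤ χ t ∧ χ t ≤ 1 := by
  obtain ⟨hsm, h1, h2, hd⟩ := hχ
  have hdiff : Differentiable ℝ χ := hsm.differentiable (by simp)
  have hdc : Continuous (deriv χ) := hsm.continuous_deriv (by exact_mod_cast le_top)
  rcases le_or_gt t 1 with ht1 | ht1
  · rw [h1 t ht1]; norm_num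
  rcases le_or_gt 2 t with ht2 | ht2
  · rw [h2 t ht2]; norm_num
  constructor
  · have ftc : ∫ x in t..2, deriv χ x = χ 2 - χ t :=
      intervalIntegral.integral_deriv_eq_sub (fun x _ => hdiff x)
        (hdc.intervalIntegrable _ _)
    have hnp : ∫ x in t..2, deriv χ x ≤ 0 := by
      rw [intervalIntegral.integral_of_le ht2.le, MeasureTheory.integral_Ioc_eq_integral_Ioo]
      apply MeasureTheory.setIntegral_nonpos_ae measurableSet_Ioo
      filter_upwards with x hx
      exact (hd x (lt_trans ht1 hx.1) hx.2).2.le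
    rw [h2 2 le_rfl] at ftc
    linarith [ftc ▸ hnp]
  · have ftc : ∫ x in (1:ℝ)..t, deriv χ x = χ t - χ 1 :=
      intervalIntegral.integral_deriv_eq_sub (fun x _ => hdiff x)
        (hdc.intervalIntegrable _ _)
    have hnp : ∫ x in (1:ℝ)..t, deriv χ x ≤ 0 := by
      rw [intervalIntegral.integral_of_le ht1.le, MeasureTheory.integral_Ioc_eq_integral_Ioo]
      apply MeasureTheory.setIntegral_nonpos_ae measurableSet_Ioo
      filter_upwards with x hx
      exact (hd x hx.1 (lt_trans hx.2 ht2)).2.le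
    rw [h1 1 le_rfl] at ftc
    linarith [ftc ▸ hnp]

lemma normPlusSq_nonneg (u : ℝ × ℝ → ℝ) : 0 ≤ normPlusSq u := by
  apply mul_nonneg (by positivity)
  apply tsum_nonneg
  intro jk
  split_ifs
  · positivity
  · exact le_refl 0

lemma normMinusSq_nonneg (u : ℝ × ℝ → ℝ) : 0 ≤ normMinusSq u := by
  apply mul_nonneg (by positivity)
  apply tsum_nonneg
  intro jk
  split_ifs
  · positivity
  · exact le_refl 0

lemma vtNormSq_nonneg (u : ℝ × ℝ → ℝ) : 0 ≤ vtNormSq u := by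
  apply mul_nonneg (by positivity)
  exact tsum_nonneg fun j => by positivity

lemma normPlusSq_le (e : ℕ → ℕ × ℕ × Bool) (he : IsEnum e) {n m : ℕ} (hn : 1 ≤ n)
    {u : ℝ × ℝ → ℝ} (hu : u ∈ Wnm e n m) (huc : Continuous u) {C : ℝ}
    (hC : ∀ p, |u p| ≤ C) :
    normPlusSq u ≤ Real.pi ^ 2 * (n * (eigenval (e (n-1)) *
      (2 * (2 / Real.pi ^ 2 * ∫ p in Qset, |u p|) ^ 2))) := by
  obtain ⟨hinj, hrange, hmono⟩ := he
  set L : ℝ := ∫ p in Qset, |u p| with hL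
  have hLnn : 0 ≤ L :=
    MeasureTheory.setIntegral_nonneg measurableSet_Qset (fun p _ => abs_nonneg _)
  set B : ℝ := (2 / Real.pi ^ 2 * L) ^ 2 with hB
  have hBnn : 0 ≤ B := sq_nonneg _
  set Λ : ℝ := eigenval (e (n-1)) with hΛ
  have hmem : ∀ l : ℕ, e l ∈ IdxSet := by
    intro l; rw [← hrange]; exact Set.mem_range_self l
  have hΛpos : 0 < Λ := by
    obtain ⟨hj1, hjk⟩ := hmem (n-1)
    rw [hΛ, eigenval]
    have : ((e (n-1)).1 : ℝ) < ((e (n-1)).2.1 : ℝ) := by exact_mod_cast hjk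
    nlinarith [this, (by positivity : (0:ℝ) ≤ ((e (n-1)).1 : ℝ))]
  set F : Finset (ℕ × ℕ) := (Finset.range n).image (fun l => ((e l).1, (e l).2.1)) with hF
  set g : ℕ × ℕ → ℝ := fun jk =>
    if jk.1 < jk.2 then
      |((jk.2 : ℝ) ^ 2 - (jk.1 : ℝ) ^ 2)| * ((coefA jk.1 jk.2 u) ^ 2 + (coefB jk.1 jk.2 u) ^ 2)
    else 0 with hg
  have hsupp : ∀ jk : ℕ × ℕ, jk ∉ F → g jk = 0 := by
    intro jk hjk
    by_cases hlt : jk.1 < jk.2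
    · have hS : (jk.1, jk.2) ∉ pairsn e n := by
        rintro ⟨l, hl, heq⟩
        apply hjk
        rw [hF]
        apply Finset.mem_image.mpr
        exact ⟨l, Finset.mem_range.mpr hl, by rw [heq]⟩
      obtain ⟨h1, h2⟩ := coef_vanish e n m hu hlt hS
      simp only [hg, if_pos hlt, h1, h2]
      ring
    · simp only [hg, if_neg hlt]
  have hts : ∑' jk : ℕ × ℕ, g jk = ∑ jk ∈ F, g jk := tsum_eq_sum hsupp
  have hterm : ∀ jk ∈ F, g jk ≤ Λ * (2 * B) := by
    intro jk hjk
    rw [hF] at hjk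
    obtain ⟨l, hl, heq⟩ := Finset.mem_image.mp hjk
    rw [Finset.mem_range] at hl
    have hlval : ((e l).1, (e l).2.1) = jk := heq
    obtain ⟨hj1, hjlt⟩ := hmem l
    have hjk1 : jk.1 < jk.2 := by
      rw [← hlval]; exact hjlt
    have habs : |((jk.2 : ℝ) ^ 2 - (jk.1 : ℝ) ^ 2)| ≤ Λ := by
      have hcast : ((jk.1 : ℝ)) < (jk.2 : ℝ) := by exact_mod_cast hjk1
      have hnn : (0:ℝ) ≤ (jk.2 : ℝ) ^ 2 - (jk.1 : ℝ) ^ 2 := by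
        nlinarith [hcast, (by positivity : (0:ℝ) ≤ (jk.1 : ℝ))]
      rw [abs_of_nonneg hnn]
      have : eigenval (e l) ≤ Λ := hmono l (n-1) (by omega)
      have hev : eigenval (e l) = (jk.2 : ℝ) ^ 2 - (jk.1 : ℝ) ^ 2 := by
        rw [eigenval, ← hlval]
      linarith [hev ▸ this]
    have hcoefA : (coefA jk.1 jk.2 u) ^ 2 ≤ B := by
      rw [hB, ← sq_abs (coefA jk.1 jk.2 u)]
      exact pow_le_pow_left₀ (abs_nonneg _) (coefA_abs_le huc hC jk.1 jk.2) 2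
    have hcoefB : (coefB jk.1 jk.2 u) ^ 2 ≤ B := by
      rw [hB, ← sq_abs (coefB jk.1 jk.2 u)]
      exact pow_le_pow_left₀ (abs_nonneg _) (coefB_abs_le huc hC jk.1 jk.2) 2
    simp only [hg, if_pos hjk1]
    exact mul_le_mul habs (by linarith) (by positivity) hΛpos.le
  have hsum1 : ∑ jk ∈ F, g jk ≤ F.card • (Λ * (2 * B)) := Finset.sum_le_card_nsmul F g _ hterm
  have hsum2 : (F.card : ℝ) * (Λ * (2 * B)) ≤ n * (Λ * (2 * B)) := by
    apply mul_le_mul_of_nonneg_right _ (by positivity)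
    have hcard : F.card ≤ n := le_trans (Finset.card_image_le) (by simp)
    exact_mod_cast hcard
  have hsum : ∑ jk ∈ F, g jk ≤ n * (Λ * (2 * B)) := by
    rw [nsmul_eq_mul] at hsum1
    linarith
  unfold normPlusSq
  have hgid : ∑' jk : ℕ × ℕ, (if jk.1 < jk.2 then
      |((jk.2 : ℝ) ^ 2 - (jk.1 : ℝ) ^ 2)| * ((coefA jk.1 jk.2 u) ^ 2 + (coefB jk.1 jk.2 u) ^ 2)
    else 0) = ∑' jk : ℕ × ℕ, g jk := rfl
  rw [hgid, hts]
  exact mul_le_mul_of_nonneg_left hsum (by positivity)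

end Helpers

set_option maxHeartbeats 2000000 in
/-- `J_β → -∞` uniformly on spheres of large radius in
`E^{+n} ⊕ E^{-m} ⊕ N^m`, uniformly in `β ∈ (0,1]` and `m`. -/
theorem statement10 (s : ℝ) (hs : 1 < s) (f : ℝ × ℝ → ℝ) (hf : fAdmissible f)
    (e : ℕ → ℕ × ℕ × Bool) (he : IsEnum e) (a6 : ℝ) (ha6 : 0 < a6)
    (χ : ℝ → ℝ) (hχ : chiAdmissible χ) :
    ∀ n : ℕ, 1 ≤ n → ∀ A : ℝ, 0 < A → ∃ Rstar : ℝ, 0 < Rstar ∧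
      ∀ R : ℝ, Rstar ≤ R → ∀ β ∈ Set.Ioc (0 : ℝ) 1, ∀ m : ℕ, n ≤ m →
        ∀ u ∈ Wnm e n m, normBeta β u = R → Jbeta s f a6 χ β u ≤ -A := by
  intro n hn A hA
  have hfc : Continuous f := hf.1.continuous
  -- bound of f on Q
  have hK : IsCompact (Set.Icc ((0:ℝ),(0:ℝ)) (Real.pi, 2*Real.pi)) := isCompact_Icc
  obtain ⟨M, hM⟩ := hK.exists_bound_of_continuousOn hfc.continuousOn
  have hMQ : ∀ p ∈ Qset, |f p| ≤ M := by
    intro p hp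
    obtain ⟨⟨h1, h2⟩, h3, h4⟩ := hp
    have hpK : p ∈ Set.Icc ((0:ℝ),(0:ℝ)) (Real.pi, 2*Real.pi) := by
      constructor
      · exact ⟨h1.le, h3.le⟩
      · exact ⟨h2.le, h4.le⟩
    simpa [Real.norm_eq_abs] using hM p hpK
  have hπ := Real.pi_pos
  have hQpt : ((Real.pi/2, Real.pi) : ℝ × ℝ) ∈ Qset := by
    constructor
    · constructor <;> [nlinarith; nlinarith]
    · constructor <;> nlinarith
  have hM0 : 0 ≤ M := le_trans (abs_nonneg _) (hMQ _ hQpt)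
  -- constants
  have hκ : 0 < 1/(s+1) := by positivity
  set κ : ℝ := 1/(s+1) with hκdef
  set V : ℝ := (volume Qset).toReal with hVdef
  have hV : 0 < V := volQ_toReal_pos
  set Λ : ℝ := eigenval (e (n-1)) with hΛdef
  have hΛpos : 0 < Λ := by
    have hmem : e (n-1) ∈ IdxSet := by
      rw [← he.2.1]; exact Set.mem_range_self _
    obtain ⟨hj1, hjk⟩ := hmem
    rw [hΛdef, eigenval]
    have hc : ((e (n-1)).1 : ℝ) < ((e (n-1)).2.1 : ℝ) := by exact_mod_cast hjk
    nlinarith [hc, (by positivity : (0:ℝ) ≤ ((e (n-1)).1 : ℝ))]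
  set D : ℝ := Real.pi ^ 2 * n * Λ * 2 * (2/Real.pi^2)^2 with hDdef
  have hnpos : (0:ℝ) < n := by exact_mod_cast hn
  have hD : 0 < D := by rw [hDdef]; positivity
  set εx : ℝ := κ/(2*D*V+1) with hεxdef
  have hεx : 0 < εx := by rw [hεxdef]; positivity
  set εf : ℝ := κ/(2*(M+1)) with hεfdef
  have hεf : 0 < εf := by rw [hεfdef]; positivity
  set c1 : ℝ := (1/εx) ^ (1/((s+1)/2-1)) with hc1def
  have hc1 : 0 ≤ c1 := Real.rpow_nonneg (by positivity) _
  set c2 : ℝ := (1/εf) ^ (1/s) with hc2def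
  have hc2 : 0 ≤ c2 := Real.rpow_nonneg (by positivity) _
  set Cx : ℝ := D*V*(c1*V) with hCxdef
  have hCx : 0 ≤ Cx := by rw [hCxdef]; positivity
  set Cf : ℝ := M*(c2*V) with hCfdef
  have hCf : 0 ≤ Cf := by rw [hCfdef]; positivity
  refine ⟨Real.sqrt (2*A + 2*(Cx + Cf) + 2), Real.sqrt_pos.mpr (by linarith), ?_⟩
  intro R hR β hβ m hm u huW hnorm
  obtain ⟨huc, ⟨C, hC⟩, -⟩ := good_of_mem_Wnm e n m huW
  set P : ℝ := intPow (s+1) u with hPdef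
  have hP : 0 ≤ P := intPow_nonneg _ _
  set L : ℝ := ∫ p in Qset, |u p| with hLdef
  -- the R² identity
  have hRpos : 0 < R := lt_of_lt_of_le (Real.sqrt_pos.mpr (by linarith)) hR
  have hnbsq : 0 ≤ normBetaSq β u := by
    unfold normBetaSq
    have := normPlusSq_nonneg u
    have := normMinusSq_nonneg u
    have := mul_nonneg hβ.1.le (vtNormSq_nonneg u)
    linarith
  have hR2 : normPlusSq u + normMinusSq u + β * vtNormSq u = R^2 := by
    have h1 : normBetaSq β u = R^2 := by
      rw [← hnorm, normBeta, Real.sq_sqrt hnbsq]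
    rw [normBetaSq] at h1
    exact h1
  have hRlarge : 2*A + 2*(Cx + Cf) + 2 ≤ R^2 := by
    have h1 : Real.sqrt (2*A + 2*(Cx + Cf) + 2) ^ 2 ≤ R ^ 2 :=
      pow_le_pow_left₀ (Real.sqrt_nonneg _) hR 2
    rwa [Real.sq_sqrt (by linarith)] at h1
  -- X bound
  have hXa : normPlusSq u ≤ D * L^2 := by
    have h := normPlusSq_le e he hn huW huc hC
    have heq : Real.pi ^ 2 * (n * (Λ * (2 * (2 / Real.pi ^ 2 * L) ^ 2))) = D * L^2 := by
      rw [hDdef]; ring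
    rw [← hΛdef, ← hLdef] at h
    linarith [heq ▸ h]
  have hCS : L^2 ≤ V * ∫ p in Qset, u p ^ 2 := by
    have habs2 : (fun p : ℝ × ℝ => |u p| ^ 2) = fun p => u p ^ 2 := by
      funext p; exact sq_abs _
    have h := cauchySchwarzQ (g := fun p => |u p|) (integrableOn_abs huc hC)
      (by rw [habs2]; exact integrableOn_sq huc hC)
    simp only [habs2] at h
    rw [hLdef, hVdef]
    simpa using h
  have hsq : ∫ p in Qset, u p ^ 2 ≤ c1*V + εx*P := int_sq_le hs huc hC hεx
  have habsint : L ≤ c2*V + εf*P := int_abs_le hs huc hC hεf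
  have hεxle : D * V * εx ≤ κ/2 := by
    rw [hεxdef, mul_div_assoc', div_le_div_iff₀ (by positivity) (by norm_num)]
    ring_nf
    have hinv : (0:ℝ) < (1+s)⁻¹ := inv_pos.mpr (by linarith)
    linarith [hinv]
  have hεfle : M * εf ≤ κ/2 := by
    rw [hεfdef, mul_div_assoc', div_le_div_iff₀ (by positivity) (by norm_num)]
    ring_nf
    have hinv : (0:ℝ) < (1+s)⁻¹ := inv_pos.mpr (by linarith)
    nlinarith [hinv, hM0, mul_nonneg hM0 hinv.le]
  have hX : normPlusSq u ≤ Cx + (κ/2)*P := by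
    have hXb : D * L^2 ≤ D * (V * ∫ p in Qset, u p ^ 2) :=
      mul_le_mul_of_nonneg_left hCS hD.le
    have hXd : (D*V) * ∫ p in Qset, u p ^ 2 ≤ (D*V) * (c1*V + εx*P) :=
      mul_le_mul_of_nonneg_left hsq (by positivity)
    have hXf : (D*V*εx)*P ≤ (κ/2)*P := mul_le_mul_of_nonneg_right hεxle hP
    have e1 : D * (V * ∫ p in Qset, u p ^ 2) = (D*V) * ∫ p in Qset, u p ^ 2 := by ring
    have e2 : (D*V) * (c1*V + εx*P) = Cx + (D*V*εx)*P := by rw [hCxdef]; ring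
    linarith
  -- F bound
  have hFa : |intFU f u| ≤ M * L := by
    rw [hLdef]
    exact intFU_abs_le huc hC hfc hMQ
  have hFfin : |intFU f u| ≤ Cf + (κ/2)*P := by
    have hFb : M * L ≤ M * (c2*V + εf*P) := mul_le_mul_of_nonneg_left habsint hM0
    have hFd : (M*εf)*P ≤ (κ/2)*P := mul_le_mul_of_nonneg_right hεfle hP
    have e3 : M*(c2*V+εf*P) = Cf + (M*εf)*P := by rw [hCfdef]; ring
    linarith
  -- ψ bound
  have hψb := chi_bounds hχ ((calI s f a6 β u)⁻¹ * ((1 / (s + 1)) * intPow (s + 1) u))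
  have hψ1 : -(psiCut s f a6 χ β u * intFU f u) ≤ Cf + (κ/2)*P := by
    have h1 : -(psiCut s f a6 χ β u * intFU f u) ≤ |psiCut s f a6 χ β u * intFU f u| :=
      neg_le_abs _
    have h2 : |psiCut s f a6 χ β u * intFU f u| ≤ |intFU f u| := by
      rw [abs_mul, psiCut, abs_of_nonneg hψb.1]
      exact mul_le_of_le_one_left (abs_nonneg _) hψb.2
    linarith
  -- assemble
  unfold Jbeta
  rw [← hκdef, ← hPdef]
  have hhalf : (1/2) * (normPlusSq u - normMinusSq u - β * vtNormSq u)
      = normPlusSq u - R^2/2 := by linarith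
  linarith [hX, hψ1, hRlarge, hP, hhalf]
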